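/- Reduction of weak upper gradients to real-valued compositions: let (X,d_X,m) be a metric measure space, (Y,d_Y) a separable metric space, h : X → Y Borel, (y_n) dense in Y, and η_{n,k} the 1-Lipschitz truncated distance functions at y_n with scale k. Let g ∈ L^p_loc(m), g ≥ 0. Then g is a p-weak upper gradient of h if and only if g is a p-weak upper gradient of η_{n,k} ∘ h : X → ℝ for every n, k. -/

import Mathlib

open MeasureTheory Set ENNReal Filter

/-- A curve in a metric space: a continuous map from a compact interval `[a,b]`. -/
structure Curve (X : Type*) [MetricSpace X] where
  a : ℝ
  b : ℝ
  hab : a ≤ b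
  toFun : ℝ → X
  cont : ContinuousOn toFun (Set.Icc a b)

namespace Curve

variable {X : Type*} [MetricSpace X]

/-- A curve is rectifiable if it has finite total variation. -/
def Rectifiable (γ : Curve X) : Prop :=
  eVariationOn γ.toFun (Set.Icc γ.a γ.b) ≠ ⊤

/-- The length of a curve: its total variation. -/
noncomputable def length (γ : Curve X) : ℝ :=
  (eVariationOn γ.toFun (Set.Icc γ.a γ.b)).toReal

/-- Arclength up to time `t`. -/
noncomputable def arclen (γ : Curve X) (t : ℝ) : ℝ :=
  (eVariationOn γ.toFun (Set.Icc γ.a t)).toReal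

/-- The unit speed parametrization of a curve. -/
noncomputable def unitParam (γ : Curve X) (s : ℝ) : X :=
  γ.toFun (sInf {t | t ∈ Set.Icc γ.a γ.b ∧ s ≤ γ.arclen t})

/-- The path integral `∫_γ ρ ds` of a Borel function along a curve, computed along
the unit speed parametrization. -/
noncomputable def pathIntegral (γ : Curve X) (ρ : X → ℝ≥0∞) : ℝ≥0∞ :=
  ∫⁻ s in Set.Icc 0 γ.length, ρ (γ.unitParam s)

/-- A curve is absolutely continuous if its increments are bounded by the integral of
an integrable function. -/
def IsAC (γ : Curve X) : Prop :=
  ∃ h : ℝ → ℝ, IntegrableOn h (Set.Icc γ.a γ.b) ∧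
    ∀ s t, γ.a ≤ s → s ≤ t → t ≤ γ.b →
      dist (γ.toFun s) (γ.toFun t) ≤ ∫ r in s..t, h r

/-- The image curve under a continuous map. -/
def map (γ : Curve X) {Y : Type*} [MetricSpace Y] (φ : X → Y) (hφ : Continuous φ) :
    Curve Y :=
  ⟨γ.a, γ.b, γ.hab, φ ∘ γ.toFun, hφ.comp_continuousOn γ.cont⟩

/-- A curve lies in a set `U`. -/
def In (γ : Curve X) (U : Set X) : Prop :=
  ∀ t ∈ Set.Icc γ.a γ.b, γ.toFun t ∈ U

end Curve

/-- Admissibility of a Borel function for a curve family. -/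
def Admissible {X : Type*} [MetricSpace X] [MeasurableSpace X]
    (ρ : X → ℝ≥0∞) (Γ : Set (Curve X)) : Prop :=
  Measurable ρ ∧ ∀ γ ∈ Γ, γ.Rectifiable → 1 ≤ γ.pathIntegral ρ

/-- The conformal `p`-modulus of a curve family. -/
noncomputable def PMod {X : Type*} [MetricSpace X] [MeasurableSpace X]
    (p : ℝ) (m : Measure X) (Γ : Set (Curve X)) : ℝ≥0∞ :=
  ⨅ (ρ : X → ℝ≥0∞) (_ : Admissible ρ Γ), ∫⁻ x, ρ x ^ p ∂m

/-- `g` is a `p`-weak upper gradient of `h : X → Y`: the upper gradient inequality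
holds along `Mod_p`-almost every curve. -/
def IsWUG {X : Type*} [MetricSpace X] [MeasurableSpace X] {Y : Type*} [PseudoMetricSpace Y]
    (p : ℝ) (m : Measure X) (h : X → Y) (g : X → ℝ≥0∞) : Prop :=
  Measurable g ∧ ∃ N : Set (Curve X), PMod p m N = 0 ∧
    ∀ γ : Curve X, γ ∉ N → γ.Rectifiable →
      ENNReal.ofReal (dist (h (γ.toFun γ.a)) (h (γ.toFun γ.b))) ≤ γ.pathIntegral g

/-- `g` is a `p`-weak upper gradient of `h` on the set `U` (with respect to the
restricted measure and curves lying in `U`). -/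
def IsWUGOn {X : Type*} [MetricSpace X] [MeasurableSpace X] {Y : Type*} [PseudoMetricSpace Y]
    (p : ℝ) (m : Measure X) (U : Set X) (h : X → Y) (g : X → ℝ≥0∞) : Prop :=
  Measurable g ∧ ∃ N : Set (Curve X), PMod p (m.restrict U) N = 0 ∧
    ∀ γ : Curve X, γ.In U → γ ∉ N → γ.Rectifiable →
      ENNReal.ofReal (dist (h (γ.toFun γ.a)) (h (γ.toFun γ.b))) ≤ γ.pathIntegral g

/-- Local `p`-integrability of a nonnegative Borel function. -/
def LocPInt {X : Type*} [MetricSpace X] [MeasurableSpace X]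
    (p : ℝ) (m : Measure X) (g : X → ℝ≥0∞) : Prop :=
  ∀ x : X, ∃ U : Set X, IsOpen U ∧ x ∈ U ∧ ∫⁻ y in U, g y ^ p ∂m < ⊤

/-- Local `p`-integrability on a subset. -/
def LocPIntOn {X : Type*} [MetricSpace X] [MeasurableSpace X]
    (p : ℝ) (m : Measure X) (U : Set X) (g : X → ℝ≥0∞) : Prop :=
  ∀ x ∈ U, ∃ V : Set X, IsOpen V ∧ x ∈ V ∧ ∫⁻ y in V ∩ U, g y ^ p ∂m < ⊤

/-- The truncated distance function `η_{y₀,r}`. -/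
noncomputable def eta {Y : Type*} [MetricSpace Y] (y₀ : Y) (r : ℝ) (y : Y) : ℝ :=
  if dist y y₀ < r then dist y y₀
  else if dist y y₀ < 2 * r then 2 * r - dist y y₀
  else 0


/-- `eta` is `1`-Lipschitz. -/
lemma eta_lip' {Y : Type*} [MetricSpace Y] (y₀ : Y) {r : ℝ} (_hr : 0 ≤ r) (a b : Y) :
    dist (eta y₀ r a) (eta y₀ r b) ≤ dist a b := by
  have hd := abs_le.mp (abs_dist_sub_le a b y₀)
  have ha : (0:ℝ) ≤ dist a y₀ := dist_nonneg
  have hb : (0:ℝ) ≤ dist b y₀ := dist_nonneg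
  have hab : (0:ℝ) ≤ dist a b := dist_nonneg
  rw [Real.dist_eq]
  unfold eta
  split_ifs <;> (rw [abs_sub_le_iff]; constructor <;> linarith [hd.1, hd.2])

/-- A countable union of `PMod`-null curve families is `PMod`-null. -/
lemma pMod_iUnion_null {X : Type*} [MetricSpace X] [MeasurableSpace X] {ι : Type*} [Countable ι]
    {p : ℝ} (hp : 0 < p) (m : Measure X) (N : ι → Set (Curve X))
    (hN : ∀ i, PMod p m (N i) = 0) : PMod p m (⋃ i, N i) = 0 := by
  refine le_antisymm (ENNReal.le_of_forall_pos_le_add fun ε hε _ => ?_) zero_le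
  rw [zero_add]
  obtain ⟨δ, hδpos, hδsum⟩ :=
    ENNReal.exists_pos_sum_of_countable (by exact_mod_cast hε.ne' : (ε:ℝ≥0∞) ≠ 0) ι
  have key : ∀ i, ∃ ρ : X → ℝ≥0∞, ∃ _ : Admissible ρ (N i), ∫⁻ x, ρ x ^ p ∂m < δ i := by
    intro i
    have h0 : PMod p m (N i) < δ i := by
      rw [hN i]; exact ENNReal.coe_pos.mpr (hδpos i)
    rw [PMod, iInf_lt_iff] at h0
    obtain ⟨ρ, hρ⟩ := h0
    rw [iInf_lt_iff] at hρ
    exact ⟨ρ, hρ⟩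
  choose ρ hadm hint using key
  set S : X → ℝ≥0∞ := fun x => (∑' i, ρ i x ^ p) ^ (1/p) with hS
  have hmeasS : Measurable S :=
    (Measurable.ennreal_tsum fun i => ((hadm i).1).pow_const p).pow_const (1/p)
  have hle : ∀ i x, ρ i x ≤ S x := by
    intro i x
    have h1 : ρ i x ^ p ≤ ∑' j, ρ j x ^ p := ENNReal.le_tsum i
    calc ρ i x = (ρ i x ^ p) ^ (1/p) := by
          rw [← ENNReal.rpow_mul, mul_one_div_cancel hp.ne', ENNReal.rpow_one]
      _ ≤ S x := ENNReal.rpow_le_rpow h1 (by positivity)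
  have hSp : ∀ x, S x ^ p = ∑' i, ρ i x ^ p := by
    intro x
    rw [hS]
    dsimp only
    rw [← ENNReal.rpow_mul, one_div_mul_cancel hp.ne', ENNReal.rpow_one]
  have hadmS : Admissible S (⋃ i, N i) := by
    refine ⟨hmeasS, fun γ hγ hrect => ?_⟩
    obtain ⟨i, hi⟩ := Set.mem_iUnion.mp hγ
    refine le_trans ((hadm i).2 γ hi hrect) ?_
    exact lintegral_mono fun s => hle i _
  calc PMod p m (⋃ i, N i) ≤ ∫⁻ x, S x ^ p ∂m := iInf₂_le S hadmS
    _ = ∑' i, ∫⁻ x, ρ i x ^ p ∂m := by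
        simp_rw [hSp]
        exact lintegral_tsum fun i => (((hadm i).1).pow_const p).aemeasurable
    _ ≤ ∑' i, (δ i : ℝ≥0∞) := ENNReal.tsum_le_tsum fun i => (hint i).le
    _ ≤ ε := hδsum.le

/-- Reduction to real-valued compositions: for a Borel map `h : X → Y` into a separable
metric space, a dense sequence `(y_n)` and the truncated distance functions `η_{n,k}`,
a nonnegative `g ∈ L^p_loc(m)` is a `p`-weak upper gradient of `h` iff it is a `p`-weak
upper gradient of `η_{n,k} ∘ h` for every `n` and every `k ≥ 1`. -/
theorem isWUG_iff_eta_comp {X : Type*} [MetricSpace X] [MeasurableSpace X] [BorelSpace X]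
    {Y : Type*} [MetricSpace Y] [TopologicalSpace.SeparableSpace Y]
    [MeasurableSpace Y] [BorelSpace Y]
    (p : ℝ) (hp : 1 < p) (m : Measure X)
    (h : X → Y) (hh : Measurable h)
    (y : ℕ → Y) (hy : DenseRange y)
    (g : X → ℝ≥0∞) (hgm : Measurable g) (hloc : LocPInt p m g) :
    IsWUG p m h g ↔
      ∀ n : ℕ, ∀ k : ℕ+, IsWUG p m (fun x => eta (y n) ((k : ℕ) : ℝ) (h x)) g := by
  constructor
  · rintro ⟨hgm', N, hN0, hN⟩ n k
    refine ⟨hgm', N, hN0, fun γ hγ hrect => ?_⟩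
    refine le_trans ?_ (hN γ hγ hrect)
    exact ENNReal.ofReal_le_ofReal (eta_lip' (y n) (by positivity) _ _)
  · intro H
    choose Ns hNs0 hNs using fun n k => (H n k).2
    refine ⟨hgm, ⋃ n, ⋃ k, Ns n k, ?_, ?_⟩
    · exact pMod_iUnion_null (lt_trans one_pos hp) m _ fun n =>
        pMod_iUnion_null (lt_trans one_pos hp) m _ fun k => hNs0 n k
    · intro γ hγ hrect
      have hγ' : ∀ n k, γ ∉ Ns n k := fun n k hmem =>
        hγ (Set.mem_iUnion.mpr ⟨n, Set.mem_iUnion.mpr ⟨k, hmem⟩⟩)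
      set A := h (γ.toFun γ.a) with hA
      set B := h (γ.toFun γ.b) with hB
      refine ENNReal.le_of_forall_pos_le_add fun ε hε _ => ?_
      have hε' : (0:ℝ) < ε := hε
      obtain ⟨n, hn⟩ := hy.exists_dist_lt A (half_pos hε')
      obtain ⟨K, hK⟩ := exists_nat_gt (max (dist A (y n)) (dist B (y n)))
      set k : ℕ+ := ⟨K + 1, Nat.succ_pos K⟩ with hk
      have hKr : ((K:ℝ)) ≤ (((k:ℕ):ℝ)) := by
        simp [hk]
      have hAr : dist A (y n) < ((k:ℕ):ℝ) :=
        lt_of_le_of_lt (le_max_left _ _) (lt_of_lt_of_le hK hKr)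
      have hBr : dist B (y n) < ((k:ℕ):ℝ) :=
        lt_of_le_of_lt (le_max_right _ _) (lt_of_lt_of_le hK hKr)
      have hηA : eta (y n) ((k:ℕ):ℝ) A = dist A (y n) := by
        unfold eta; rw [if_pos hAr]
      have hηB : eta (y n) ((k:ℕ):ℝ) B = dist B (y n) := by
        unfold eta; rw [if_pos hBr]
      have hkey : ENNReal.ofReal (dist (eta (y n) ((k:ℕ):ℝ) A) (eta (y n) ((k:ℕ):ℝ) B)) ≤
          γ.pathIntegral g := hNs n k γ (hγ' n k) hrect
      have htri : dist A B ≤ dist A (y n) + dist (y n) B := dist_triangle A (y n) B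
      have hcomm : dist (y n) B = dist B (y n) := dist_comm _ _
      have hlow : dist A B - ε ≤ dist (eta (y n) ((k:ℕ):ℝ) A) (eta (y n) ((k:ℕ):ℝ) B) := by
        rw [Real.dist_eq, hηA, hηB]
        have : dist A B - ε ≤ dist B (y n) - dist A (y n) := by linarith
        refine le_trans this ?_
        rw [abs_sub_comm]
        exact le_abs_self _
      calc ENNReal.ofReal (dist A B)
          = ENNReal.ofReal ((dist A B - ε) + ε) := by ring_nf
        _ ≤ ENNReal.ofReal (dist A B - ε) + ENNReal.ofReal ε := ENNReal.ofReal_add_le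
        _ ≤ γ.pathIntegral g + (ε : ℝ≥0∞) := by
            refine add_le_add ?_ ?_
            · exact le_trans (ENNReal.ofReal_le_ofReal hlow) hkey
            · rw [ENNReal.ofReal_coe_nnreal]
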